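/- (Theorem 1, part I.) The sequence ω is monotonically nonincreasing: ω(j) ≤ ω(j−1) for every integer j ≥ 1. -/
import Mathlib


open Filter

/-- Theorem 1, part I: `ω` is monotonically nonincreasing. -/
theorem omega_antitone
    (lam lam_e : ℝ) (hlam0 : 0 < lam) (hlam1 : lam < 1)
    (hle0 : 0 < lam_e) (hle1 : lam_e < 1)
    (tbar : ℕ)
    (φ : ℕ → ℝ)
    (hφ0 : φ 0 = lam * lam_e / (lam * (tbar : ℝ) + 1))
    (hφ1 : ∀ j, j < tbar → φ (j + 1) = (1 - lam) * (1 - lam_e) * φ j)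
    (hφ2 : ∀ j, tbar ≤ j → φ (j + 1) =
      (1 - lam) * (1 - lam_e) * φ j + lam * (1 - lam_e) * φ (j - tbar))
    (ω : ℕ → ℝ)
    (hω0 : ω 0 = lam_e / (lam * (tbar : ℝ) + 1))
    (hω1 : ∀ j, 1 ≤ j → j ≤ tbar →
      ω j = (1 - lam) * (1 - lam_e) * ω (j - 1) + φ 0)
    (hω2 : ∀ j, tbar + 1 ≤ j →
      ω j = (1 - lam) * (1 - lam_e) * ω (j - 1) + φ 0
        - lam_e * ∑ l ∈ Finset.range (j - tbar), φ l) :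
    ∀ j : ℕ, 1 ≤ j → ω j ≤ ω (j - 1) := by
  have hα0 : (0:ℝ) ≤ (1 - lam) * (1 - lam_e) := by nlinarith
  -- φ is nonnegative
  have hφpos : ∀ j, 0 ≤ φ j := by
    intro j
    induction j using Nat.strong_induction_on with
    | _ j ih =>
      match j with
      | 0 =>
        rw [hφ0]
        positivity
      | Nat.succ k =>
        by_cases hk : k < tbar
        · rw [hφ1 k hk]
          exact mul_nonneg hα0 (ih k (by omega))
        · rw [hφ2 k (by omega)]
          have h1 := ih k (by omega)
          have h2 := ih (k - tbar) (by omega)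
          have hβ : (0:ℝ) ≤ lam * (1 - lam_e) := by nlinarith
          exact add_nonneg (mul_nonneg hα0 h1) (mul_nonneg hβ h2)
  -- unified recursion for j ≥ tbar, j ≥ 1
  have hωrec : ∀ j, 1 ≤ j → tbar ≤ j →
      ω j = (1 - lam) * (1 - lam_e) * ω (j - 1) + φ 0
        - lam_e * ∑ l ∈ Finset.range (j - tbar), φ l := by
    intro j h1 h2
    rcases eq_or_lt_of_le h2 with h | h
    · subst h
      simp only [Nat.sub_self, Finset.range_zero, Finset.sum_empty, mul_zero, sub_zero]
      exact hω1 tbar h1 le_rfl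
    · exact hω2 j (by omega)
  have key : ∀ j : ℕ, ω (j + 1) ≤ ω j := by
    intro j
    induction j using Nat.strong_induction_on with
    | _ j ih =>
      match j with
      | 0 =>
        have hω0' : 0 ≤ ω 0 := by rw [hω0]; positivity
        have hstep : φ 0 ≤ (1 - (1 - lam) * (1 - lam_e)) * ω 0 := by
          have hφω : φ 0 = lam * ω 0 := by rw [hφ0, hω0]; ring
          rw [hφω]
          nlinarith [mul_nonneg (mul_nonneg hle0.le (by linarith : (0:ℝ) ≤ 1 - lam)) hω0']
        rcases Nat.eq_zero_or_pos tbar with ht | ht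
        · have e := hωrec 1 le_rfl (by omega)
          simp only [ht, Nat.sub_zero, Finset.sum_range_one] at e
          norm_num at e
          rw [e]
          have := hφpos 0
          nlinarith
        · have e := hω1 1 le_rfl ht
          norm_num at e
          rw [e]
          linarith
      | Nat.succ k =>
        have ihk := ih k (by omega)
        by_cases h : k + 2 ≤ tbar
        · have e2 := hω1 (k + 2) (by omega) h
          have e1 := hω1 (k + 1) (by omega) (by omega)
          have hk21 : k + 2 - 1 = k + 1 := by omega
          rw [hk21] at e2
          simp only [Nat.add_sub_cancel] at e1
          rw [e2, e1]
          nlinarith [mul_le_mul_of_nonneg_left ihk hα0]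
        · have h1 : tbar ≤ k + 1 := by omega
          have e2 := hωrec (k + 2) (by omega) (by omega)
          have e1 := hωrec (k + 1) (by omega) h1
          have sub2 : k + 2 - tbar = (k + 1 - tbar) + 1 := by omega
          have hk21 : k + 2 - 1 = k + 1 := by omega
          rw [hk21] at e2
          simp only [Nat.add_sub_cancel] at e1
          rw [e2, e1, sub2, Finset.sum_range_succ]
          have hφm := hφpos (k + 1 - tbar)
          nlinarith [mul_le_mul_of_nonneg_left ihk hα0, mul_nonneg hle0.le hφm]
  intro j hj
  match j with
  | Nat.succ k => simpa using key k
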